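/- For n agents with identical generalized binary additive valuations (common value v(g) ∈ {0, b}), the modified round-robin that gives positively-valued goods cyclically to agents 1..n and all zero-valued goods to agent n produces a TEFX allocation: at every prefix, for all i, j, and every g ∈ A_j, v(A_i) >= v(A_j \ {g}). -/
import Mathlib

private lemma modcount (n : ℕ) (hn : 0 < n) (p r : ℕ) (hr : r < n) :
    ((Finset.range p).filter (fun t => t % n = r)).card
      = p / n + if r < p % n then 1 else 0 := by
  induction p with
  | zero => simp
  | succ p ih =>
    rw [Finset.range_add_one, Finset.filter_insert]
    obtain ⟨q, r0, hr0, hp⟩ : ∃ q r0, r0 < n ∧ p = n * q + r0 :=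
      ⟨p / n, p % n, Nat.mod_lt p hn, (Nat.div_add_mod p n).symm⟩
    have hdiv : p / n = q := by
      rw [hp, Nat.mul_add_div hn, Nat.div_eq_of_lt hr0]
      omega
    have hmod : p % n = r0 := by
      rw [hp, Nat.mul_add_mod, Nat.mod_eq_of_lt hr0]
    by_cases hc : r0 + 1 = n
    · have he : p + 1 = n * (q + 1) := by rw [Nat.mul_add, Nat.mul_one]; omega
      have hdiv1 : (p + 1) / n = q + 1 := by rw [he, Nat.mul_div_cancel_left _ hn]
      have hmod1 : (p + 1) % n = 0 := by rw [he, Nat.mul_mod_right]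
      by_cases h : p % n = r
      · rw [if_pos h, Finset.card_insert_of_notMem (by simp), ih, hdiv, hmod, hdiv1, hmod1]
        rw [hmod] at h
        split_ifs <;> omega
      · rw [if_neg h, ih, hdiv, hmod, hdiv1, hmod1]
        rw [hmod] at h
        split_ifs <;> omega
    · have he : p + 1 = n * q + (r0 + 1) := by omega
      have hdiv1 : (p + 1) / n = q := by
        rw [he, Nat.mul_add_div hn, Nat.div_eq_of_lt (by omega)]
        omega
      have hmod1 : (p + 1) % n = r0 + 1 := by
        rw [he, Nat.mul_add_mod, Nat.mod_eq_of_lt (by omega)]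
      by_cases h : p % n = r
      · rw [if_pos h, Finset.card_insert_of_notMem (by simp), ih, hdiv, hmod, hdiv1, hmod1]
        rw [hmod] at h
        split_ifs <;> omega
      · rw [if_neg h, ih, hdiv, hmod, hdiv1, hmod1]
        rw [hmod] at h
        split_ifs <;> omega

private lemma sum_binary {G : Type*} [DecidableEq G] {m : ℕ} (goods : Fin m ↪ G)
    (v : G → ℝ) (b : ℝ) (hv : ∀ k : Fin m, v (goods k) = 0 ∨ v (goods k) = b)
    (T : Finset (Fin m)) :
    (T.image goods).sum v = (T.filter (fun k => v (goods k) ≠ 0)).card * b := by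
  rw [Finset.sum_image (fun a _ c _ h => goods.injective h),
    ← Finset.sum_filter_add_sum_filter_not T (fun k => v (goods k) ≠ 0)]
  have h1 : ∑ k ∈ T.filter (fun k => v (goods k) ≠ 0), v (goods k)
      = (T.filter (fun k => v (goods k) ≠ 0)).card * b := by
    rw [Finset.sum_congr rfl (fun k hk => ((hv k).resolve_left
      (Finset.mem_filter.mp hk).2 : v (goods k) = b)), Finset.sum_const, nsmul_eq_mul]
  have h2 : ∑ k ∈ T.filter (fun k => ¬ v (goods k) ≠ 0), v (goods k) = 0 :=
    Finset.sum_eq_zero (fun k hk => not_not.mp (Finset.mem_filter.mp hk).2)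
  rw [h1, h2, add_zero]

theorem stmt16 {G : Type*} [DecidableEq G] (n : ℕ) (hn : 0 < n)
    (b : ℝ) (hb : 0 < b) (m : ℕ) (goods : Fin m ↪ G) (v : G → ℝ)
    (hv : ∀ k : Fin m, v (goods k) = 0 ∨ v (goods k) = b)
    (assign : Fin m → Fin n)
    (hzero : ∀ k : Fin m, v (goods k) = 0 → (assign k : ℕ) = n - 1)
    (hpos : ∀ k : Fin m, v (goods k) = b → (assign k : ℕ) =
      (Finset.univ.filter
        (fun l : Fin m => (l : ℕ) < (k : ℕ) ∧ v (goods l) ≠ 0)).card % n) :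
    ∀ s : ℕ, ∀ i j : Fin n,
      ∀ g ∈ (Finset.univ.filter
          (fun k : Fin m => (k : ℕ) < s ∧ assign k = j)).image goods,
        (((Finset.univ.filter
            (fun k : Fin m => (k : ℕ) < s ∧ assign k = j)).image goods).erase g).sum v
          ≤ ((Finset.univ.filter
              (fun k : Fin m => (k : ℕ) < s ∧ assign k = i)).image goods).sum v := by
  intro s i j g hg
  set T : Fin n → Finset (Fin m) :=
    fun a => Finset.univ.filter (fun k : Fin m => (k : ℕ) < s ∧ assign k = a) with hT
  set f : Fin m → ℕ := fun k =>
    (Finset.univ.filter (fun l : Fin m => (l : ℕ) < (k : ℕ) ∧ v (goods l) ≠ 0)).card with hf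
  set Pos : Finset (Fin m) :=
    Finset.univ.filter (fun k : Fin m => (k : ℕ) < s ∧ v (goods k) ≠ 0) with hPos
  set p : ℕ := Pos.card with hp
  -- strict monotonicity of rank on positives
  have hmono : ∀ k l : Fin m, v (goods k) ≠ 0 → (k : ℕ) < (l : ℕ) → f k < f l := by
    intro k l hk hkl
    have hsub : insert k (Finset.univ.filter
        (fun l' : Fin m => (l' : ℕ) < (k : ℕ) ∧ v (goods l') ≠ 0))
        ⊆ Finset.univ.filter (fun l' : Fin m => (l' : ℕ) < (l : ℕ) ∧ v (goods l') ≠ 0) := by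
      intro x hx
      rcases Finset.mem_insert.mp hx with h | h
      · subst h
        simp only [Finset.mem_filter, Finset.mem_univ, true_and]
        exact ⟨hkl, hk⟩
      · simp only [Finset.mem_filter, Finset.mem_univ, true_and] at h ⊢
        exact ⟨h.1.trans hkl, h.2⟩
    have := Finset.card_le_card hsub
    rwa [Finset.card_insert_of_notMem (by simp)] at this
  have hbound : ∀ k, k ∈ Pos → f k < p := by
    intro k hk
    simp only [hPos, Finset.mem_filter, Finset.mem_univ, true_and] at hk
    have hsub : insert k (Finset.univ.filter
        (fun l' : Fin m => (l' : ℕ) < (k : ℕ) ∧ v (goods l') ≠ 0)) ⊆ Pos := by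
      intro x hx
      rcases Finset.mem_insert.mp hx with h | h
      · subst h
        simp only [hPos, Finset.mem_filter, Finset.mem_univ, true_and]
        exact ⟨hk.1, hk.2⟩
      · simp only [Finset.mem_filter, Finset.mem_univ, true_and] at h
        simp only [hPos, Finset.mem_filter, Finset.mem_univ, true_and]
        exact ⟨h.1.trans hk.1, h.2⟩
    have := Finset.card_le_card hsub
    rwa [Finset.card_insert_of_notMem (by simp)] at this
  have hinjOn : Set.InjOn f ↑Pos := by
    intro k hk l hl heq
    simp only [Finset.coe_filter, Set.mem_setOf_eq, hPos, Finset.mem_coe,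
      Finset.mem_filter, Finset.mem_univ, true_and] at hk hl
    by_contra hne
    have hval : (k : ℕ) ≠ (l : ℕ) := fun h => hne (Fin.ext h)
    rcases lt_or_gt_of_ne hval with h | h
    · exact absurd heq (Nat.ne_of_lt (hmono k l hk.2 h))
    · exact absurd heq.symm (Nat.ne_of_lt (hmono l k hl.2 h))
  have himage : Pos.image f = Finset.range p := by
    apply Finset.eq_of_subset_of_card_le
    · intro t ht
      obtain ⟨k, hk, rfl⟩ := Finset.mem_image.mp ht
      exact Finset.mem_range.mpr (hbound k hk)
    · rw [Finset.card_range, Finset.card_image_of_injOn hinjOn]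
  -- counting per agent
  have hcard : ∀ a : Fin n, ((T a).filter (fun k => v (goods k) ≠ 0)).card
      = p / n + if (a : ℕ) < p % n then 1 else 0 := by
    intro a
    have hset : (T a).filter (fun k => v (goods k) ≠ 0)
        = Pos.filter (fun k => f k % n = (a : ℕ)) := by
      ext k
      simp only [hT, hPos, Finset.mem_filter, Finset.mem_univ, true_and]
      constructor
      · rintro ⟨⟨hks, hka⟩, hkp⟩
        refine ⟨⟨hks, hkp⟩, ?_⟩
        have := hpos k ((hv k).resolve_left hkp)
        rw [← this, hka]
      · rintro ⟨⟨hks, hkp⟩, hmod⟩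
        refine ⟨⟨hks, ?_⟩, hkp⟩
        have := hpos k ((hv k).resolve_left hkp)
        exact Fin.ext (by rw [this, hmod])
    rw [hset, ← modcount n hn p (a : ℕ) a.isLt, ← himage, Finset.filter_image,
      Finset.card_image_of_injOn (hinjOn.mono (Finset.filter_subset _ _))]
  obtain ⟨k0, hk0T, hk0g⟩ := Finset.mem_image.mp hg
  rw [← hk0g, ← Finset.image_erase goods.injective, sum_binary goods v b hv,
    sum_binary goods v b hv, Finset.filter_erase]
  simp only [hT, Finset.mem_filter, Finset.mem_univ, true_and] at hk0T
  have hpn : p % n < n := Nat.mod_lt p hn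
  by_cases hvz : v (goods k0) = 0
  · have hjn : (j : ℕ) = n - 1 := by rw [← hk0T.2]; exact hzero k0 hvz
    have hnm : k0 ∉ (T j).filter (fun k => v (goods k) ≠ 0) := by
      simp [hvz]
    rw [Finset.erase_eq_of_notMem hnm, hcard i, hcard j]
    have hle : p / n + (if (j : ℕ) < p % n then 1 else 0)
        ≤ p / n + (if (i : ℕ) < p % n then 1 else 0) := by
      have hnj : ¬ (j : ℕ) < p % n := by omega
      simp only [hnj, if_false]
      generalize p / n = d
      split <;> omega
    exact mul_le_mul_of_nonneg_right (Nat.cast_le.mpr hle) hb.le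
  · have hk0mem : k0 ∈ (T j).filter (fun k => v (goods k) ≠ 0) := by
      simp only [hT, Finset.mem_filter, Finset.mem_univ, true_and]
      exact ⟨hk0T, hvz⟩
    rw [Finset.card_erase_of_mem hk0mem, hcard i, hcard j]
    have hle : p / n + (if (j : ℕ) < p % n then 1 else 0) - 1
        ≤ p / n + (if (i : ℕ) < p % n then 1 else 0) := by
      generalize p / n = d
      split <;> split <;> omega
    exact mul_le_mul_of_nonneg_right (Nat.cast_le.mpr hle) hb.le
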